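/- For any k-tuple of partitions λ = (λ⁽¹⁾,...,λ⁽ᵏ⁾) into non-negative parts and any integer u, let λ⁺ be obtained from λ by adding m to every part of λ⁽ᵐ⁾ for each m ∈ {1,...,k}. Then applying the particle-motion insertion map Λ to (λ⁺, fs_{u-1}(λ⁺)) yields the same generalised frequency sequence as applying Λ to (λ, fs_u(λ)): Λ(λ⁺, fs_{u-1}(λ⁺)) = Λ(λ, fs_u(λ)). -/
import Mathlib


/-- The particle-motion process: `PPM (f, u) m (g, v)` means that starting from the
generalised frequency sequence `f` with focus at index `u`, after exactly `m` particle
motions (interleaved with the forced focus shifts) the process stops at the sequence `g`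
with focus at index `v`.  With `h := f_w + f_{w+1}` the invariant sum of the focused pair:
if `f_{w+1} + f_{w+2} = h` the focus shifts to `w+1` (no motion); if `f_{w+1} + f_{w+2} < h`
the pair `(f_w, f_{w+1})` becomes `(f_w - 1, f_{w+1} + 1)` (one motion).  The process stops
immediately after the `m`-th motion (or at once if `m = 0`). -/
inductive PPM : ((ℤ → ℕ) × ℤ) → ℕ → ((ℤ → ℕ) × ℤ) → Prop
  | zero (f : ℤ → ℕ) (w : ℤ) : PPM (f, w) 0 (f, w)
  | shift {f : ℤ → ℕ} {w : ℤ} {m : ℕ} {t : (ℤ → ℕ) × ℤ} (hm : 0 < m)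
      (hcond : f (w+1) + f (w+2) = f w + f (w+1))
      (h : PPM (f, w+1) m t) : PPM (f, w) m t
  | motion {f : ℤ → ℕ} {w : ℤ} {m : ℕ} {t : (ℤ → ℕ) × ℤ}
      (hcond : f (w+1) + f (w+2) < f w + f (w+1))
      (h : PPM (Function.update (Function.update f w (f w - 1)) (w+1) (f (w+1) + 1), w) m t) :
      PPM (f, w) (m+1) t

/-- `mIdx k s i` is the number of `m ∈ {1,…,k}` with `i < s m`; for `s₁ ≥ ⋯ ≥ s_k` and
`s_{m+1} ≤ i < s_m` this equals `m`, i.e. the superscript of the renamed part `λ_i`. -/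
def mIdx (k : ℕ) (s : ℕ → ℕ) (i : ℕ) : ℕ :=
  ((Finset.Icc 1 k).filter fun m => i < s m).card

/-- The `u`-frame sequence of a `k`-tuple of partitions with lengths `s_m - s_{m+1}`:
`s_k` pairs `(k,0)`, then `s_{k-1} - s_k` pairs `(k-1,0)`, …, then `s₁ - s₂` pairs
`(1,0)`, at consecutive pairs of positions starting at index `u`, and `0` elsewhere. -/
def frameSeq (k : ℕ) (s : ℕ → ℕ) (u : ℤ) : ℤ → ℕ := fun i =>
  if 0 ≤ i - u ∧ (i - u) % 2 = 0 then mIdx k s ((i - u) / 2).toNat else 0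

/-- `IsLambda k s u P R` : `R` is the result of the insertion map `Λ` applied to the
tuple of partitions whose renamed parts are `P 0, P 1, …, P (s 1 - 1)` (read from the
right, `P i` belonging to `λ^{(mIdx i)}`), starting from the `u`-frame sequence:
`R = (ppm_u^{(P 0)} ∘ ppm_{u+2}^{(P 1)} ∘ ⋯ ∘ ppm_{u+2s₁-2}^{(P (s₁-1))})(fs_u)`. -/
def IsLambda (k : ℕ) (s : ℕ → ℕ) (u : ℤ) (P : ℕ → ℕ) (R : ℤ → ℕ) : Prop :=
  ∃ g : ℕ → (ℤ → ℕ), g (s 1) = frameSeq k s u ∧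
    (∀ i, i < s 1 → ∃ v : ℤ, PPM (g (i+1), u + 2*(i : ℤ)) (P i) (g i, v)) ∧ R = g 0

theorem PPM.left_inv : ∀ {p q : (ℤ → ℕ) × ℤ} {n : ℕ}, PPM p n q →
    p.2 ≤ q.2 ∧ ∀ x, x < p.2 → q.1 x = p.1 x := by
  intro p q n h
  induction h with
  | zero f w => exact ⟨le_refl _, fun x _ => rfl⟩
  | shift hm hcond h ih =>
      refine ⟨le_trans (by simp) ih.1, fun x hx => ?_⟩
      simp only at hx ⊢
      exact ih.2 x (by simp only []; omega)
  | motion hcond h ih =>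
      refine ⟨ih.1, fun x hx => ?_⟩
      simp only at hx ⊢
      rw [ih.2 x hx]
      simp only [Function.update_apply]
      rw [if_neg (by omega), if_neg (by omega)]

theorem PPM.det : ∀ {p q q' : (ℤ → ℕ) × ℤ} {n : ℕ}, PPM p n q → PPM p n q' → q = q' := by
  intro p q q' n h
  induction h generalizing q' with
  | zero f w =>
      intro h'
      cases h' with
      | zero => rfl
      | shift hm hcond h2 => omega
  | shift hm hcond h ih =>
      intro h'
      cases h' with
      | zero => omega
      | shift hm2 hcond2 h2 => exact ih h2
      | motion hcond2 h2 => omega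
  | motion hcond h ih =>
      intro h'
      cases h' with
      | shift hm2 hcond2 h2 => omega
      | motion hcond2 h2 => exact ih h2

theorem PPM.zero_inv {f : ℤ → ℕ} {w : ℤ} {t : (ℤ → ℕ) × ℤ} (h : PPM (f, w) 0 t) :
    t = (f, w) := (PPM.det (PPM.zero f w) h).symm

theorem PPM.transport : ∀ {p q : (ℤ → ℕ) × ℤ} {n : ℕ}, PPM p n q →
    ∀ f' : ℤ → ℕ, (∀ x, p.2 ≤ x → f' x = p.1 x) →
    PPM (f', p.2) n (fun x => if p.2 ≤ x then q.1 x else f' x, q.2) := by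
  intro p q n h
  induction h with
  | zero f w =>
      intro f' hf'
      simp only
      have e : (fun x => if w ≤ x then f x else f' x) = f' := by
        funext x
        split
        · exact (hf' x ‹_›).symm
        · rfl
      rw [e]
      exact PPM.zero f' w
  | @shift f w m t hm hcond h ih =>
      intro f' hf'
      simp only at hf' ⊢
      apply PPM.shift hm
      · rw [hf' (w+1) (by omega), hf' (w+2) (by omega), hf' w le_rfl]
        exact hcond
      · have hfw : t.1 w = f w := (PPM.left_inv h).2 w (by simp)
        have := ih f' (fun x hx => hf' x (by simp at hx ⊢; omega))
        simp only at this
        have e : (fun x => if w + 1 ≤ x then t.1 x else f' x)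
            = (fun x => if w ≤ x then t.1 x else f' x) := by
          funext x
          by_cases h1 : w + 1 ≤ x
          · rw [if_pos h1, if_pos (by omega)]
          · by_cases h2 : w ≤ x
            · have hxw : x = w := by omega
              subst hxw
              rw [if_neg h1, if_pos h2, hfw, hf' x le_rfl]
            · rw [if_neg h1, if_neg h2]
        rw [e] at this
        exact this
  | @motion f w m t hcond h ih =>
      intro f' hf'
      simp only at hf' ⊢
      apply PPM.motion
      · rw [hf' (w+1) (by omega), hf' (w+2) (by omega), hf' w le_rfl]
        exact hcond
      · have hagree : ∀ x, w ≤ x →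
            (Function.update (Function.update f' w (f' w - 1)) (w+1) (f' (w+1) + 1)) x
            = (Function.update (Function.update f w (f w - 1)) (w+1) (f (w+1) + 1)) x := by
          intro x hx
          simp only [Function.update_apply]
          by_cases h1 : x = w + 1
          · rw [if_pos h1, if_pos h1, hf' (w+1) (by omega)]
          · rw [if_neg h1, if_neg h1]
            by_cases h2 : x = w
            · rw [if_pos h2, if_pos h2, hf' w le_rfl]
            · rw [if_neg h2, if_neg h2, hf' x hx]
        have := ih _ hagree
        simp only at this
        have e : (fun x => if w ≤ x then t.1 x
              else (Function.update (Function.update f' w (f' w - 1)) (w+1) (f' (w+1) + 1)) x)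
            = (fun x => if w ≤ x then t.1 x else f' x) := by
          funext x
          split
          · rfl
          · simp only [Function.update_apply]
            rw [if_neg (by omega), if_neg (by omega)]
        rw [e] at this
        exact this

theorem PPM.drain : ∀ (m : ℕ) {n : ℕ} {f : ℤ → ℕ} {w : ℤ} {t : (ℤ → ℕ) × ℤ},
    f (w+2) = 0 → f w = m → PPM (f, w) (m + n) t →
    PPM (fun x => if x = w + 1 then f (w+1) + m else if x = w then 0 else f x, w) n t := by
  intro m
  induction m with
  | zero =>
      intro n f w t h2 h0 h
      have e : (fun x => if x = w + 1 then f (w+1) + 0 else if x = w then 0 else f x) = f := by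
        funext x
        split
        · subst ‹x = w + 1›; rfl
        · split
          · subst ‹x = w›; omega
          · rfl
      rw [e]
      simpa using h
  | succ m ih =>
      intro n f w t h2 h0 h
      have h' : PPM (f, w) ((m + n) + 1) t := by
        rw [show (m+n)+1 = (m+1)+n by omega]; exact h
      cases h' with
      | shift hm hcond hsub => omega
      | motion hcond hsub =>
          have h2' : (Function.update (Function.update f w (f w - 1)) (w+1) (f (w+1) + 1)) (w+2) = 0 := by
            simp only [Function.update_apply]
            rw [if_neg (by omega), if_neg (by omega)]
            exact h2
          have h0' : (Function.update (Function.update f w (f w - 1)) (w+1) (f (w+1) + 1)) w = m := by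
            simp only [Function.update_apply]
            split_ifs <;> omega
          have := ih h2' h0' hsub
          have e : (fun x => if x = w + 1 then
                (Function.update (Function.update f w (f w - 1)) (w+1) (f (w+1) + 1)) (w+1) + m
              else if x = w then 0
              else (Function.update (Function.update f w (f w - 1)) (w+1) (f (w+1) + 1)) x)
            = (fun x => if x = w + 1 then f (w+1) + (m+1) else if x = w then 0 else f x) := by
            funext x
            by_cases h1 : x = w + 1
            · rw [if_pos h1, if_pos h1]
              simp only [Function.update_apply]
              split_ifs <;> omega
            · rw [if_neg h1, if_neg h1]
              by_cases hx2 : x = w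
              · rw [if_pos hx2, if_pos hx2]
              · rw [if_neg hx2, if_neg hx2]
                simp only [Function.update_apply]
                rw [if_neg h1, if_neg hx2]
          rw [e] at this
          exact this

lemma mIdx_zero (k : ℕ) (s : ℕ → ℕ) (hmono : ∀ m, 1 ≤ m → m ≤ k → s m ≤ s 1)
    {j : ℕ} (hj : s 1 ≤ j) : mIdx k s j = 0 := by
  unfold mIdx
  rw [Finset.card_eq_zero, Finset.filter_eq_empty_iff]
  intro m hm
  rw [Finset.mem_Icc] at hm
  have := hmono m hm.1 hm.2
  omega

lemma frameSeq_even (k : ℕ) (s : ℕ → ℕ) (u : ℤ) (i : ℕ) :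
    frameSeq k s u (u + 2*(i:ℤ)) = mIdx k s i := by
  unfold frameSeq
  rw [if_pos (by omega)]
  congr 1
  omega

lemma frameSeq_zero (k : ℕ) (s : ℕ → ℕ) (u : ℤ) (x : ℤ)
    (h : ¬ (0 ≤ x - u ∧ (x - u) % 2 = 0)) : frameSeq k s u x = 0 := by
  unfold frameSeq
  rw [if_neg h]

lemma frameSeq_hi (k : ℕ) (s : ℕ → ℕ) (hmono : ∀ m, 1 ≤ m → m ≤ k → s m ≤ s 1)
    (u : ℤ) (x : ℤ) (h : u + 2*(s 1 : ℤ) ≤ x + 1) : frameSeq k s u x = 0 := by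
  unfold frameSeq
  split
  · next hc => exact mIdx_zero k s hmono (by omega)
  · rfl

/-- Shift invariance of the insertion map `Λ` (Proposition `prop:shift` of the paper):
if `λ⁺` is obtained from the `k`-tuple `λ` by adding `m` to each part of `λ^{(m)}`
(so its renamed parts are `P i + mIdx i`), then
`Λ(λ⁺, fs_{u-1}(λ⁺)) = Λ(λ, fs_u(λ))` (note `fs_{u-1}(λ⁺) = fs_{u-1}(λ)`). -/
theorem stmt16 (k : ℕ) (hk : 1 ≤ k) (s : ℕ → ℕ)
    (hdec : ∀ m, 1 ≤ m → m ≤ k → s (m+1) ≤ s m) (hsk : s (k+1) = 0)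
    (P : ℕ → ℕ)
    (hpart : ∀ i, i + 1 < s 1 → mIdx k s i = mIdx k s (i+1) → P i ≤ P (i+1))
    (u : ℤ) (R R' : ℤ → ℕ)
    (hR : IsLambda k s u P R)
    (hR' : IsLambda k s (u - 1) (fun i => P i + mIdx k s i) R') :
    R' = R := by
  have hmono : ∀ m, 1 ≤ m → m ≤ k → s m ≤ s 1 := by
    intro m
    induction m with
    | zero => omega
    | succ m ih =>
        intro _ h2
        rcases Nat.eq_zero_or_pos m with hm | hm
        · subst hm; exact le_refl _
        · exact le_trans (hdec m hm (by omega)) (ih hm (by omega))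
  obtain ⟨g, hgf, hgstep, hgR⟩ := hR
  obtain ⟨g', hgf', hgstep', hgR'⟩ := hR'
  set Inv : ℕ → Prop := fun i =>
    (∀ x : ℤ, u + 2*(i:ℤ) - 1 ≤ x → g' i x = g i x) ∧
    (∀ x : ℤ, x ≤ u + 2*(i:ℤ) - 2 → g' i x = frameSeq k s (u-1) x) ∧
    (∀ x : ℤ, x ≤ u + 2*(i:ℤ) - 1 → g i x = frameSeq k s u x) with hInv
  have base : Inv (s 1) := by
    simp only [hInv]
    refine ⟨?_, ?_, ?_⟩
    · intro x hx
      rw [hgf, hgf', frameSeq_hi k s hmono u x (by omega),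
        frameSeq_hi k s hmono (u-1) x (by omega)]
    · intro x _; rw [hgf']
    · intro x _; rw [hgf]
  have step : ∀ i : ℕ, i < s 1 → Inv (i+1) → Inv i := by
    intro i hi hI
    simp only [hInv] at hI ⊢
    obtain ⟨I1, I2, I3⟩ := hI
    obtain ⟨v, hppm⟩ := hgstep i hi
    obtain ⟨v', hppm'⟩ := hgstep' i hi
    set w : ℤ := u + 2*(i:ℤ) with hw
    have ew : u - 1 + 2*(i:ℤ) = w - 1 := by omega
    rw [ew] at hppm'
    -- values of g' (i+1) around the new focus
    have A1 : g' (i+1) (w - 1) = mIdx k s i := by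
      rw [I2 (w-1) (by omega), show w - 1 = (u-1) + 2*(i:ℤ) by omega, frameSeq_even]
    have A2 : g' (i+1) w = 0 := by
      rw [I2 w (by omega)]
      exact frameSeq_zero k s (u-1) w (by omega)
    have A3 : g' (i+1) (w + 1) = 0 := by
      rw [I1 (w+1) (by omega), I3 (w+1) (by omega)]
      exact frameSeq_zero k s u (w+1) (by omega)
    have C1 : g (i+1) w = mIdx k s i := by
      rw [I3 w (by omega), hw, frameSeq_even]
    have C0 : g (i+1) (w - 1) = 0 := by
      rw [I3 (w-1) (by omega)]
      exact frameSeq_zero k s u (w-1) (by omega)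
    -- drain the pile of size mIdx k s i at w-1 to w
    replace hppm' : PPM (g' (i+1), w - 1) (mIdx k s i + P i) (g' i, v') := by
      rw [show mIdx k s i + P i = P i + mIdx k s i by omega]
      exact hppm'
    have hd := PPM.drain (mIdx k s i)
      (by rw [show w - 1 + 2 = w + 1 by omega]; exact A3) A1 hppm'
    set f₂ : ℤ → ℕ := fun x => if x = w then mIdx k s i else if x = w - 1 then 0
        else g' (i+1) x with hf₂
    have ef : (fun x => if x = w - 1 + 1 then g' (i+1) (w - 1 + 1) + mIdx k s i
        else if x = w - 1 then 0 else g' (i+1) x) = f₂ := by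
      funext x
      simp only [hf₂]
      by_cases h1 : x = w
      · rw [if_pos (by omega), if_pos h1, show w - 1 + 1 = w by omega, A2]
        omega
      · rw [if_neg (by omega), if_neg h1]
    rw [ef] at hd
    -- computed values of f₂
    have F0 : f₂ (w - 1) = 0 := by
      simp only [hf₂]; split_ifs <;> omega
    have FW : f₂ w = mIdx k s i := by
      simp only [hf₂]; split_ifs <;> omega
    have F2 : f₂ (w + 1) = 0 := by
      simp only [hf₂]; rw [if_neg (by omega), if_neg (by omega)]; exact A3
    -- f₂ agrees with g (i+1) on [w, ∞)
    have B : ∀ x, w ≤ x → g (i+1) x = f₂ x := by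
      intro x hx
      simp only [hf₂]
      by_cases h1 : x = w
      · rw [if_pos h1, h1, C1]
      · rw [if_neg h1, if_neg (by omega)]
        exact (I1 x (by omega)).symm
    -- left preservation of the primed step
    have L' : ∀ x, x < w - 1 → g' i x = g' (i+1) x := fun x hx =>
      (PPM.left_inv hppm').2 x hx
    rcases Nat.eq_zero_or_pos (P i) with hP | hP
    · -- P i = 0 : both processes stop immediately (after the drain)
      rw [hP] at hppm hd
      have e1 : (g i, v) = (g (i+1), w) := PPM.zero_inv hppm
      have e2 : ((g' i : ℤ → ℕ), v') = (f₂, w - 1) := PPM.zero_inv hd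
      have egi : g i = g (i+1) := congrArg Prod.fst e1
      have egi' : g' i = f₂ := congrArg Prod.fst e2
      refine ⟨?_, ?_, ?_⟩
      · intro x hx
        rw [egi, egi']
        by_cases h1 : x = w
        · rw [h1, FW, C1]
        · by_cases h2 : x = w - 1
          · rw [h2, F0, C0]
          · rw [← B x (by omega)]
      · intro x hx
        rw [egi']
        simp only [hf₂]
        rw [if_neg (by omega), if_neg (by omega)]
        exact I2 x (by omega)
      · intro x hx
        rw [egi]
        exact I3 x (by omega)
    · -- P i > 0 : the primed process is forced to shift focus from w-1 to w
      obtain ⟨n', hn'⟩ : ∃ n', P i = n' + 1 := ⟨P i - 1, by omega⟩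
      rw [hn'] at hd
      have hsub : PPM (f₂, w) (P i) (g' i, v') := by
        cases hd with
        | shift hm hcond hsub =>
            rw [show w - 1 + 1 = w by omega] at hsub
            rw [hn']
            exact hsub
        | motion hcond hsub =>
            rw [show w - 1 + 1 = w by omega, show w - 1 + 2 = w + 1 by omega,
              F0, FW, F2] at hcond
            omega
      have ht := PPM.transport hsub (g (i+1)) B
      have hdet := PPM.det hppm ht
      have egix : ∀ x : ℤ, g i x = if w ≤ x then g' i x else g (i+1) x := fun x =>
        congrFun (congrArg Prod.fst hdet) x
      have Lf : ∀ x, x < w → g' i x = f₂ x := fun x hx => (PPM.left_inv hsub).2 x hx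
      refine ⟨?_, ?_, ?_⟩
      · intro x hx
        by_cases hxw : w ≤ x
        · rw [egix x, if_pos hxw]
        · have hx1 : x = w - 1 := by omega
          rw [egix x, if_neg hxw, hx1, C0, Lf (w-1) (by omega), F0]
      · intro x hx
        rw [L' x (by omega)]
        exact I2 x (by omega)
      · intro x hx
        rw [egix x, if_neg (by omega)]
        exact I3 x (by omega)
  have all : ∀ d : ℕ, Inv (s 1 - d) := by
    intro d
    induction d with
    | zero => rw [Nat.sub_zero]; exact base
    | succ d ih =>
        by_cases hd : s 1 ≤ d
        · rw [show s 1 - (d+1) = s 1 - d by omega]; exact ih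
        · have e : s 1 - d = (s 1 - (d+1)) + 1 := by omega
          exact step _ (by omega) (e ▸ ih)
  have inv0 := all (s 1)
  rw [Nat.sub_self] at inv0
  simp only [hInv] at inv0
  obtain ⟨J1, J2, J3⟩ := inv0
  rw [hgR, hgR']
  funext x
  rcases le_or_gt (u - 1) x with hx | hx
  · exact J1 x (by omega)
  · rw [J3 x (by omega), J2 x (by omega),
      frameSeq_zero k s (u-1) x (by omega), frameSeq_zero k s u x (by omega)]
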